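/- Let α > 0, let θ_1, …, θ_L be i.i.d. real random variables uniformly distributed on [−α, α], and let X_1, …, X_L be complex random variables with E[|X_l|²] < ∞ such that the random vector (θ_1, …, θ_L) is independent of the random vector (X_1, …, X_L). Then E[ |Σ_{l=1}^L e^{iθ_l} X_l|² ] = ν̃ · E[ |Σ_{l=1}^L X_l|² ] + (1 − ν̃) · Σ_{l=1}^L E[|X_l|²], where ν̃ = (sin(α)/α)². -/

import Mathlib

open MeasureTheory Set ProbabilityTheory
open Complex

/-- The uniform probability measure on the interval `[-a, a]`. -/
noncomputable def uniformIcc (a : ℝ) : Measure ℝ :=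
  (volume (Icc (-a) a))⁻¹ • volume.restrict (Icc (-a) a)

lemma integral_cexp_I_uniformIcc {α : ℝ} (hα : 0 < α) :
    ∫ t : ℝ, Complex.exp ((t : ℂ) * Complex.I) ∂(uniformIcc α) = ((Real.sin α / α : ℝ) : ℂ) := by
  have hle : -α ≤ α := by linarith
  rw [uniformIcc, integral_smul_measure, Real.volume_Icc,
    MeasureTheory.integral_Icc_eq_integral_Ioc,
    ← intervalIntegral.integral_of_le hle]
  have h1 : ∀ x : ℝ, (x : ℂ) * Complex.I = Complex.I * x := fun x => mul_comm _ _
  simp_rw [h1]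
  rw [integral_exp_mul_complex Complex.I_ne_zero]
  have h2 : (α : ℝ) - -α = 2 * α := by ring
  rw [h2, ENNReal.toReal_inv, ENNReal.toReal_ofReal (by linarith)]
  have h3 : Complex.I * ((-α : ℝ) : ℂ) = (-(α:ℝ) : ℂ) * Complex.I := by push_cast; ring
  have h4 : Complex.I * ((α : ℝ) : ℂ) = ((α:ℝ):ℂ) * Complex.I := by ring
  rw [h3, h4, Complex.exp_mul_I, Complex.exp_mul_I, Complex.cos_neg, Complex.sin_neg]
  have h5 : (Complex.cos ↑α + Complex.sin ↑α * Complex.I -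
      (Complex.cos ↑α + -Complex.sin ↑α * Complex.I)) / Complex.I = 2 * Complex.sin ↑α := by
    field_simp
    ring_nf
  rw [h5, real_smul, ← Complex.ofReal_sin]
  push_cast
  field_simp

lemma integral_cexp_neg_I_uniformIcc {α : ℝ} (hα : 0 < α) :
    ∫ t : ℝ, Complex.exp (-(t : ℂ) * Complex.I) ∂(uniformIcc α)
      = ((Real.sin α / α : ℝ) : ℂ) := by
  have h := integral_conj (μ := uniformIcc α) (f := fun t : ℝ => Complex.exp ((t : ℂ) * Complex.I))
  rw [integral_cexp_I_uniformIcc hα, Complex.conj_ofReal] at h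
  rw [← h]
  congr 1
  funext t
  rw [← Complex.exp_conj]
  congr 1
  simp [Complex.conj_I]

lemma indepFun_integral_comp_mul {Ω β γ : Type*} [MeasurableSpace Ω] [MeasurableSpace β]
    [MeasurableSpace γ] {μ : Measure Ω} [IsProbabilityMeasure μ] {f : Ω → β} {g : Ω → γ}
    (h : IndepFun f g μ) (hf : AEMeasurable f μ) (hg : AEMeasurable g μ)
    {F : β → ℂ} {G : γ → ℂ} (hF : Measurable F) (hG : Measurable G) :
    ∫ ω, F (f ω) * G (g ω) ∂μ = (∫ ω, F (f ω) ∂μ) * ∫ ω, G (g ω) ∂μ := by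
  have hmap := (indepFun_iff_map_prod_eq_prod_map_map hf hg).mp h
  haveI : IsProbabilityMeasure (μ.map f) := Measure.isProbabilityMeasure_map hf
  haveI : IsProbabilityMeasure (μ.map g) := Measure.isProbabilityMeasure_map hg
  have h1 : ∫ ω, F (f ω) * G (g ω) ∂μ
      = ∫ p : β × γ, F p.1 * G p.2 ∂(μ.map (fun ω => (f ω, g ω))) := by
    rw [integral_map (hf.prodMk hg)
      (show Measurable fun p : β × γ => F p.1 * G p.2 from
        (hF.comp measurable_fst).mul (hG.comp measurable_snd)).aestronglyMeasurable]
  rw [h1, hmap, integral_prod_mul, integral_map hf hF.aestronglyMeasurable,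
    integral_map hg hG.aestronglyMeasurable]

/-- If `θ_1, …, θ_L` are i.i.d. `~ U[-α, α]` with `α > 0`, and `X_1, …, X_L` are
square-integrable complex random variables with `(θ_1, …, θ_L)` independent of
`(X_1, …, X_L)`, then
`E[|Σ_l e^{iθ_l} X_l|²] = ν̃ E[|Σ_l X_l|²] + (1 - ν̃) Σ_l E[|X_l|²]` with
`ν̃ = (sin α / α)²`. -/
theorem expectation_sq_norm_sum_phase_random
    {Ω : Type*} [MeasurableSpace Ω] (μ : Measure Ω) [IsProbabilityMeasure μ]
    (α : ℝ) (hα : 0 < α) (L : ℕ) (θ : Fin L → Ω → ℝ)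
    (hθ : ∀ l, AEMeasurable (θ l) μ)
    (hindep : iIndepFun θ μ)
    (hmap : ∀ l, μ.map (θ l) = uniformIcc α)
    (X : Fin L → Ω → ℂ)
    (hX : ∀ l, MemLp (X l) 2 μ)
    (hindepX : IndepFun (fun ω l => θ l ω) (fun ω l => X l ω) μ) :
    ∫ ω, ‖∑ l, Complex.exp ((θ l ω : ℂ) * Complex.I) * X l ω‖ ^ 2 ∂μ
      = (Real.sin α / α) ^ 2 * ∫ ω, ‖∑ l, X l ω‖ ^ 2 ∂μ
        + (1 - (Real.sin α / α) ^ 2) * ∑ l, ∫ ω, ‖X l ω‖ ^ 2 ∂μ := by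
  classical
  set ν : ℝ := (Real.sin α / α) ^ 2 with hνdef
  set Z : Fin L → Ω → ℂ := fun l ω => Complex.exp ((θ l ω : ℂ) * Complex.I) * X l ω with hZdef
  have hXm : ∀ l, AEStronglyMeasurable (X l) μ := fun l => (hX l).1
  have hconjm : ∀ l, AEStronglyMeasurable (fun ω => (starRingEnd ℂ) (X l ω)) μ := fun l =>
    Complex.continuous_conj.comp_aestronglyMeasurable (hXm l)
  have hsq : ∀ l, Integrable (fun ω => ‖X l ω‖ ^ 2) μ := fun l =>
    (memLp_two_iff_integrable_sq_norm (hXm l)).mp (hX l)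
  have hInt : ∀ l m, Integrable (fun ω => X l ω * (starRingEnd ℂ) (X m ω)) μ := by
    intro l m
    refine Integrable.mono' (((hsq l).add (hsq m)).div_const 2)
      ((hXm l).mul (hconjm m)) ?_
    filter_upwards with ω
    simp only [Pi.add_apply]
    rw [norm_mul, RCLike.norm_conj]
    nlinarith [sq_nonneg (‖X l ω‖ - ‖X m ω‖), norm_nonneg (X l ω), norm_nonneg (X m ω)]
  have hZm : ∀ l, AEStronglyMeasurable (Z l) μ := by
    intro l
    exact ((Complex.measurable_exp.comp_aemeasurable
      (((Complex.measurable_ofReal.comp_aemeasurable (hθ l))).mul_const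
        Complex.I)).aestronglyMeasurable).mul (hXm l)
  have hnormZ : ∀ l ω, ‖Z l ω‖ = ‖X l ω‖ := by
    intro l ω
    rw [hZdef]
    simp [norm_mul, Complex.norm_exp_ofReal_mul_I]
  have hZInt : ∀ l m, Integrable (fun ω => Z l ω * (starRingEnd ℂ) (Z m ω)) μ := by
    intro l m
    refine Integrable.mono' (hInt l m).norm
      ((hZm l).mul (Complex.continuous_conj.comp_aestronglyMeasurable (hZm m))) ?_
    filter_upwards with ω
    have h5 : ∀ w : ℂ, ‖(starRingEnd ℂ) w‖ = ‖w‖ := fun w => RCLike.norm_conj w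
    rw [norm_mul, h5, hnormZ, hnormZ, ← h5 (X m ω), ← norm_mul]
  -- re-integral helper
  have hire : ∀ {f : Ω → ℂ}, Integrable f μ → ∫ ω, (f ω).re ∂μ = (∫ ω, f ω ∂μ).re := by
    intro f hf
    simpa using integral_re hf
  -- the key factorization
  have hT : AEMeasurable (fun ω => fun l => θ l ω) μ := by
    refine ⟨fun ω l => (hθ l).mk _ ω, measurable_pi_lambda _ (fun l => (hθ l).measurable_mk), ?_⟩
    have h6 : ∀ᵐ ω ∂μ, ∀ l, θ l ω = (hθ l).mk _ ω := ae_all_iff.mpr fun l => (hθ l).ae_eq_mk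
    filter_upwards [h6] with ω h
    funext l; exact h l
  have hXam : ∀ l, AEMeasurable (X l) μ := fun l => (hXm l).aemeasurable
  have hV : AEMeasurable (fun ω => fun l => X l ω) μ := by
    refine ⟨fun ω l => (hXam l).mk _ ω, measurable_pi_lambda _ (fun l => (hXam l).measurable_mk), ?_⟩
    have h6 : ∀ᵐ ω ∂μ, ∀ l, X l ω = (hXam l).mk _ ω := ae_all_iff.mpr fun l => (hXam l).ae_eq_mk
    filter_upwards [h6] with ω h
    funext l; exact h l
  have key : ∀ l m : Fin L, ∫ ω, Z l ω * (starRingEnd ℂ) (Z m ω) ∂μ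
      = ((if l = m then (1:ℝ) else ν) : ℂ) * ∫ ω, X l ω * (starRingEnd ℂ) (X m ω) ∂μ := by
    intro l m
    have hΦ : Measurable (fun t : Fin L → ℝ =>
        Complex.exp ((t l : ℂ) * Complex.I) * Complex.exp (-(t m : ℂ) * Complex.I)) := by
      fun_prop
    have hΨ : Measurable (fun x : Fin L → ℂ => x l * (starRingEnd ℂ) (x m)) :=
      (measurable_pi_apply l).mul
        (Complex.continuous_conj.measurable.comp (measurable_pi_apply m))
    have heq : (fun ω => Z l ω * (starRingEnd ℂ) (Z m ω)) = fun ω =>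
        (fun t : Fin L → ℝ =>
          Complex.exp ((t l : ℂ) * Complex.I) * Complex.exp (-(t m : ℂ) * Complex.I))
            ((fun ω l => θ l ω) ω)
        * (fun x : Fin L → ℂ => x l * (starRingEnd ℂ) (x m)) ((fun ω l => X l ω) ω) := by
      funext ω
      rw [hZdef]
      simp only [map_mul, ← Complex.exp_conj, map_mul, Complex.conj_ofReal, Complex.conj_I,
        mul_neg, neg_mul]
      ring
    rw [heq, indepFun_integral_comp_mul hindepX hT hV hΦ hΨ]
    congr 1
    by_cases hlm : l = m
    · subst hlm
      simp only [if_pos rfl]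
      have h8 : ∀ ω, Complex.exp ((θ l ω : ℂ) * Complex.I) *
          Complex.exp (-((θ l ω : ℂ) * Complex.I)) = 1 := fun ω => by
        rw [← Complex.exp_add]; simp
      simp only [neg_mul] at h8 ⊢
      simp [h8]
    · rw [if_neg hlm]
      have hind2 : IndepFun (θ l) (θ m) μ := hindep.indepFun hlm
      have h2 := indepFun_integral_comp_mul hind2 (hθ l) (hθ m)
        (F := fun t : ℝ => Complex.exp ((t : ℂ) * Complex.I))
        (G := fun t : ℝ => Complex.exp (-(t : ℂ) * Complex.I))
        (by fun_prop) (by fun_prop)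
      simp only at h2 ⊢
      rw [h2]
      have e1 : ∫ ω, Complex.exp ((θ l ω : ℂ) * Complex.I) ∂μ = ((Real.sin α / α : ℝ) : ℂ) := by
        rw [← integral_map (hθ l)
          (show Measurable fun t : ℝ => Complex.exp ((t : ℂ) * Complex.I) by
            fun_prop).aestronglyMeasurable, hmap l, integral_cexp_I_uniformIcc hα]
      have e2 : ∫ ω, Complex.exp (-(θ m ω : ℂ) * Complex.I) ∂μ = ((Real.sin α / α : ℝ) : ℂ) := by
        rw [← integral_map (hθ m)
          (show Measurable fun t : ℝ => Complex.exp (-(t : ℂ) * Complex.I) by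
            fun_prop).aestronglyMeasurable, hmap m, integral_cexp_neg_I_uniformIcc hα]
      rw [e1, e2, hνdef]
      push_cast
      ring
  -- expansion of the squared norm of a finite sum
  have hnorm : ∀ z : Fin L → ℂ, ‖∑ l, z l‖ ^ 2 = ∑ l, ∑ m, (z l * (starRingEnd ℂ) (z m)).re := by
    intro z
    have h1 : ((∑ l, z l) * (starRingEnd ℂ) (∑ m, z m)) = ∑ l, ∑ m, z l * (starRingEnd ℂ) (z m) := by
      rw [map_sum, Finset.sum_mul_sum]
    have h2 : ‖∑ l, z l‖ ^ 2 = ((∑ l, z l) * (starRingEnd ℂ) (∑ m, z m)).re := by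
      rw [Complex.mul_conj]
      simp [Complex.sq_norm]
    rw [h2, h1, Complex.re_sum]
    exact Finset.sum_congr rfl fun l _ => (Complex.re_sum _ _).symm ▸ rfl
  -- expand both sides as double sums
  have expand : ∀ (W : Fin L → Ω → ℂ), (∀ l m, Integrable (fun ω => W l ω * (starRingEnd ℂ) (W m ω)) μ) →
      ∫ ω, ‖∑ l, W l ω‖ ^ 2 ∂μ = ∑ l, ∑ m, (∫ ω, W l ω * (starRingEnd ℂ) (W m ω) ∂μ).re := by
    intro W hW
    have h1 : (fun ω => ‖∑ l, W l ω‖ ^ 2)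
        = fun ω => ∑ l, ∑ m, (W l ω * (starRingEnd ℂ) (W m ω)).re := by
      funext ω; exact hnorm _
    have hre : ∀ l m, Integrable (fun ω => (W l ω * (starRingEnd ℂ) (W m ω)).re) μ := by
      intro l m
      simpa using (hW l m).re
    rw [h1, integral_finset_sum _ (fun l _ => integrable_finset_sum _ (fun m _ => hre l m))]
    refine Finset.sum_congr rfl fun l _ => ?_
    rw [integral_finset_sum _ (fun m _ => hre l m)]
    exact Finset.sum_congr rfl fun m _ => hire (hW l m)
  have hL : ∫ ω, ‖∑ l, Z l ω‖ ^ 2 ∂μ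
      = ∑ l, ∑ m, (∫ ω, Z l ω * (starRingEnd ℂ) (Z m ω) ∂μ).re := expand Z hZInt
  have hR : ∫ ω, ‖∑ l, X l ω‖ ^ 2 ∂μ
      = ∑ l, ∑ m, (∫ ω, X l ω * (starRingEnd ℂ) (X m ω) ∂μ).re := expand X hInt
  have hdiag : ∀ l, ∫ ω, ‖X l ω‖ ^ 2 ∂μ = (∫ ω, X l ω * (starRingEnd ℂ) (X l ω) ∂μ).re := by
    intro l
    have h1 : (fun ω => ‖X l ω‖ ^ 2) = fun ω => (X l ω * (starRingEnd ℂ) (X l ω)).re := by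
      funext ω
      rw [Complex.mul_conj]
      simp [Complex.sq_norm]
    rw [h1, hire (hInt l l)]
  show ∫ ω, ‖∑ l, Z l ω‖ ^ 2 ∂μ = ν * ∫ ω, ‖∑ l, X l ω‖ ^ 2 ∂μ + (1 - ν) * ∑ l, ∫ ω, ‖X l ω‖ ^ 2 ∂μ
  rw [hL, hR]
  have hc : ∀ (p : Prop) [Decidable p] (r : ℝ),
      (if p then 1 * r else ν * r) = ν * r + (if p then (1 - ν) * r else 0) := by
    intro p _ r; split_ifs with h <;> ring
  simp_rw [hdiag, key, ite_mul, apply_ite Complex.re, Complex.re_ofReal_mul, hc,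
    Finset.sum_add_distrib, Finset.sum_ite_eq, Finset.mem_univ, if_true, Finset.mul_sum]
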